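/- Two-point testing bound (bounded case): Suppose ‖f‖_∞ ≤ B_F for all f ∈ F, and we test H₀: f̄ = f vs H₁: f̄ = g where n‖f − g‖²_{L2(P_X)} ≥ C²δ² for some C > 3. The test ψ(Y⃗) = 1(‖Y⃗ − f(X⃗)‖₂² ≥ ‖Y⃗ − g(X⃗)‖₂²) satisfies: the maximum of sup over f̄ with n‖f − f̄‖²_{L2(P_X)} < δ² of P_{f̄}(ψ = 1), and sup over f̄ with n‖g − f̄‖²_{L2(P_X)} < δ² of P_{f̄}(ψ = 0), is at most 3·exp(−L(C, σ, B_F)·δ²), where L(C, σ, B_F) = min{ (√(C²−1) − 2√2)²/(8σ²), 3/(64 B_F²), 3/(16 B_F² (3C² + 1)) }. -/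

import Mathlib

open MeasureTheory ProbabilityTheory ENNReal

noncomputable section

/-- The `L2(P_X)` distance between two functions. -/
def dist2 {X : Type*} [MeasurableSpace X] (μ : Measure X) (f g : X → ℝ) : ℝ :=
  Real.sqrt (∫ x, (f x - g x) ^ 2 ∂μ)

/-- Largest cardinality of an `r`-packing of `S` in the `L2(μ)` norm. -/
def packNum {X : Type*} [MeasurableSpace X] (μ : Measure X) (r : ℝ)
    (S : Set (X → ℝ)) : ℝ≥0∞ :=
  ⨆ (T : Finset (X → ℝ)) (_ : ↑T ⊆ S ∧
      ∀ f ∈ T, ∀ g ∈ T, f ≠ g → r < dist2 μ f g), (T.card : ℝ≥0∞)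

/-- Local packing number `M^loc_F(ε, c)`. -/
def Mloc {X : Type*} [MeasurableSpace X] (μ : Measure X) (F : Set (X → ℝ))
    (ε c : ℝ) : ℝ≥0∞ :=
  ⨆ f ∈ F, packNum μ (ε / c) ({g | dist2 μ f g ≤ ε} ∩ F)

/-- Joint law of the data `((X_1,…,X_n),(Y_1,…,Y_n))` where the `X_i` are i.i.d. `μ` and
`Y_i = f(X_i) + ξ_i` with `ξ_i` i.i.d. `N(0,σ²)` independent of the `X_i`. -/
def jointLaw {X : Type*} [MeasurableSpace X] (μ : Measure X) [IsProbabilityMeasure μ]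
    (σ : ℝ) (n : ℕ) (f : X → ℝ) : Measure ((Fin n → X) × (Fin n → ℝ)) :=
  ((Measure.pi fun _ : Fin n => μ).prod
      (Measure.pi fun _ : Fin n => gaussianReal 0 ⟨σ ^ 2, sq_nonneg σ⟩)).map
    fun p => (p.1, fun i => f (p.1 i) + p.2 i)

/-- Minimax risk over `F` for the squared `L2(μ)` loss. -/
def minimaxRisk {X : Type*} [MeasurableSpace X] (μ : Measure X) [IsProbabilityMeasure μ]
    (σ : ℝ) (n : ℕ) (F : Set (X → ℝ)) : ℝ≥0∞ :=
  ⨅ (fhat : (Fin n → X) × (Fin n → ℝ) → X → ℝ)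
    (_ : Measurable fhat ∧ ∀ dat, fhat dat ∈ F),
    ⨆ f ∈ F, ∫⁻ dat, ENNReal.ofReal ((dist2 μ (fhat dat) f) ^ 2) ∂(jointLaw μ σ n f)


/-- The exponent constant `L(C, σ, B_F)` of equation (2.2). -/
def Lconst (C σ B : ℝ) : ℝ :=
  min (min ((Real.sqrt (C ^ 2 - 1) - 2 * Real.sqrt 2) ^ 2 / (8 * σ ^ 2))
      (3 / (64 * B ^ 2)))
    (3 / (16 * B ^ 2 * (3 * C ^ 2 + 1)))


section Helpers
open Real MeasureTheory ProbabilityTheory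
lemma exp_neg_le_quad (u : ℝ) (hu : 0 ≤ u) : Real.exp (-u) ≤ 1 - u + u ^ 2 := by
  have h1 : Real.exp (-u) = (Real.exp u)⁻¹ := Real.exp_neg u
  have h2 : u + 1 ≤ Real.exp u := Real.add_one_le_exp u
  have h3 : (0:ℝ) < 1 + u := by linarith
  have h4 : (Real.exp u)⁻¹ ≤ (1 + u)⁻¹ := by apply inv_anti₀ h3; linarith
  have h5 : (1 + u)⁻¹ ≤ 1 - u + u ^ 2 := by
    rw [inv_le_iff_one_le_mul₀ h3]; nlinarith
  linarith [h1 ▸ h4.trans h5]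

lemma exp_le_quad (u : ℝ) (h0 : 0 ≤ u) (h1 : u ≤ 1) : Real.exp u ≤ 1 + u + u ^ 2 := by
  have hb := Real.exp_bound (x := u) (by rw [abs_of_nonneg h0]; exact h1) (n := 3) (by norm_num)
  have h2 : Real.exp u - (1 + u + u^2/2) ≤ u^3 * (4/18) := by
    have h := (abs_le.mp hb).2
    have hs : ∑ m ∈ Finset.range 3, u ^ m / (m.factorial : ℝ) = 1 + u + u^2/2 := by
      norm_num [Finset.sum_range_succ, Nat.factorial]
    rw [hs, abs_of_nonneg h0] at h
    calc Real.exp u - (1 + u + u^2/2) ≤ _ := h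
      _ = u^3 * (4/18) := by norm_num [Nat.factorial]
  nlinarith [pow_le_pow_left₀ h0 h1 3, sq_nonneg u]

lemma integrable_of_bdd {α : Type*} [MeasurableSpace α] {κ : Measure α} [IsFiniteMeasure κ]
    {u : α → ℝ} (hm : Measurable u) {c : ℝ} (hb : ∀ a, |u a| ≤ c) : Integrable u κ :=
  (integrable_const c).mono' hm.aestronglyMeasurable (ae_of_all _ hb)

variable {α : Type*} [MeasurableSpace α] (κ : Measure α) [IsProbabilityMeasure κ]

lemma sq_int_facts (w : α → ℝ) (hw : Measurable w) (B : ℝ)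
    (hbd : ∀ a, w a ^ 2 ≤ 4 * B ^ 2) :
    Integrable (fun a => w a ^ 2) κ ∧ Integrable (fun a => (w a ^ 2) ^ 2) κ ∧
      0 ≤ ∫ a, w a ^ 2 ∂κ ∧
      ∫ a, (w a ^ 2) ^ 2 ∂κ ≤ 4 * B ^ 2 * ∫ a, w a ^ 2 ∂κ := by
  have hi2 : Integrable (fun a => w a ^ 2) κ := by
    apply integrable_of_bdd (hw.pow_const 2)
    intro a; rw [abs_of_nonneg (sq_nonneg _)]; exact hbd a
  have hi4 : Integrable (fun a => (w a ^ 2) ^ 2) κ := by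
    apply integrable_of_bdd ((hw.pow_const 2).pow_const 2) (c := (4 * B ^ 2) ^ 2)
    intro a; rw [abs_of_nonneg (sq_nonneg _)]
    exact pow_le_pow_left₀ (sq_nonneg _) (hbd a) 2
  refine ⟨hi2, hi4, integral_nonneg fun a => sq_nonneg _, ?_⟩
  calc ∫ a, (w a ^ 2) ^ 2 ∂κ ≤ ∫ a, 4 * B ^ 2 * w a ^ 2 ∂κ := by
        apply integral_mono hi4 (hi2.const_mul _)
        intro a
        have h := hbd a
        calc (w a ^ 2) ^ 2 = w a ^ 2 * w a ^ 2 := sq (w a ^ 2)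
          _ ≤ 4 * B ^ 2 * w a ^ 2 := mul_le_mul_of_nonneg_right h (sq_nonneg _)
    _ = 4 * B ^ 2 * ∫ a, w a ^ 2 ∂κ := integral_const_mul _ _

lemma mgf_sq_le (w : α → ℝ) (hw : Measurable w) (B lam : ℝ)
    (hbd : ∀ a, w a ^ 2 ≤ 4 * B ^ 2) (hlam : 0 ≤ lam) (hlam2 : lam * (4 * B ^ 2) ≤ 1 / 2) :
    ∫ a, Real.exp (lam * w a ^ 2) ∂κ ≤ Real.exp (3 / 2 * lam * ∫ a, w a ^ 2 ∂κ) := by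
  obtain ⟨hi2, hi4, hm0, h42⟩ := sq_int_facts κ w hw B hbd
  have hB2 : (0:ℝ) ≤ 4 * B ^ 2 := by positivity
  have key : ∀ a, Real.exp (lam * w a ^ 2) ≤ 1 + lam * w a ^ 2 + (lam * w a ^ 2) ^ 2 := by
    intro a
    apply exp_le_quad _ (by positivity)
    have h1 : lam * w a ^ 2 ≤ lam * (4 * B ^ 2) := by
      apply mul_le_mul_of_nonneg_left (hbd a) hlam
    linarith
  have hint : Integrable (fun a => 1 + lam * w a ^ 2 + (lam * w a ^ 2) ^ 2) κ := by
    have : (fun a => 1 + lam * w a ^ 2 + (lam * w a ^ 2) ^ 2)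
        = fun a => 1 + lam * w a ^ 2 + lam ^ 2 * (w a ^ 2) ^ 2 := by funext a; ring
    rw [this]
    exact ((integrable_const 1).add (hi2.const_mul _)).add (hi4.const_mul _)
  have hiexp : Integrable (fun a => Real.exp (lam * w a ^ 2)) κ := by
    apply integrable_of_bdd (by fun_prop)
    intro a
    rw [abs_of_nonneg (Real.exp_nonneg _)]
    apply Real.exp_le_exp.2
    exact mul_le_mul_of_nonneg_left (hbd a) hlam
  calc ∫ a, Real.exp (lam * w a ^ 2) ∂κ
      ≤ ∫ a, (1 + lam * w a ^ 2 + (lam * w a ^ 2) ^ 2) ∂κ := integral_mono hiexp hint key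
    _ = 1 + lam * ∫ a, w a ^ 2 ∂κ + lam ^ 2 * ∫ a, (w a ^ 2) ^ 2 ∂κ := by
        have hsq : Integrable (fun a => (lam * w a ^ 2) ^ 2) κ := by
          have h : (fun a => (lam * w a ^ 2) ^ 2) = fun a => lam ^ 2 * (w a ^ 2) ^ 2 := by
            funext a; ring
          rw [h]; exact hi4.const_mul _
        have e1 := integral_add (μ := κ) ((integrable_const 1).add (hi2.const_mul lam)) hsq
        have e2 := integral_add (μ := κ) (integrable_const 1) (hi2.const_mul lam)
        simp only [Pi.add_apply, Pi.sub_apply, integral_const, probReal_univ, smul_eq_mul, one_mul] at e1 e2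
        rw [e1, e2, integral_const_mul]
        have h : (fun a => (lam * w a ^ 2) ^ 2) = fun a => lam ^ 2 * (w a ^ 2) ^ 2 := by
          funext a; ring
        rw [h, integral_const_mul]
    _ ≤ 1 + 3 / 2 * lam * ∫ a, w a ^ 2 ∂κ := by
        have h1 : lam ^ 2 * ∫ a, (w a ^ 2) ^ 2 ∂κ ≤ lam ^ 2 * (4 * B ^ 2 * ∫ a, w a ^ 2 ∂κ) := by
          apply mul_le_mul_of_nonneg_left h42 (sq_nonneg _)
        nlinarith [mul_le_mul_of_nonneg_right hlam2 hm0, sq_nonneg lam,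
          mul_nonneg hlam hm0]
    _ ≤ Real.exp (3 / 2 * lam * ∫ a, w a ^ 2 ∂κ) := by
        linarith [Real.add_one_le_exp (3 / 2 * lam * ∫ a, w a ^ 2 ∂κ)]

lemma mgf_neg_sq_le (w : α → ℝ) (hw : Measurable w) (B lam : ℝ)
    (hbd : ∀ a, w a ^ 2 ≤ 4 * B ^ 2) (hlam : 0 ≤ lam) :
    ∫ a, Real.exp (-(lam * w a ^ 2)) ∂κ ≤
      Real.exp ((lam ^ 2 * (4 * B ^ 2) - lam) * ∫ a, w a ^ 2 ∂κ) := by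
  obtain ⟨hi2, hi4, hm0, h42⟩ := sq_int_facts κ w hw B hbd
  have key : ∀ a, Real.exp (-(lam * w a ^ 2)) ≤ 1 - lam * w a ^ 2 + (lam * w a ^ 2) ^ 2 :=
    fun a => exp_neg_le_quad _ (by positivity)
  have hint : Integrable (fun a => 1 - lam * w a ^ 2 + (lam * w a ^ 2) ^ 2) κ := by
    have : (fun a => 1 - lam * w a ^ 2 + (lam * w a ^ 2) ^ 2)
        = fun a => 1 - lam * w a ^ 2 + lam ^ 2 * (w a ^ 2) ^ 2 := by funext a; ring
    rw [this]
    exact ((integrable_const 1).sub (hi2.const_mul _)).add (hi4.const_mul _)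
  have hiexp : Integrable (fun a => Real.exp (-(lam * w a ^ 2))) κ := by
    apply integrable_of_bdd (by fun_prop) (c := 1)
    intro a
    rw [abs_of_nonneg (Real.exp_nonneg _)]
    apply Real.exp_le_one_iff.2
    simp only [neg_nonpos]
    positivity
  calc ∫ a, Real.exp (-(lam * w a ^ 2)) ∂κ
      ≤ ∫ a, (1 - lam * w a ^ 2 + (lam * w a ^ 2) ^ 2) ∂κ := integral_mono hiexp hint key
    _ = 1 - lam * ∫ a, w a ^ 2 ∂κ + lam ^ 2 * ∫ a, (w a ^ 2) ^ 2 ∂κ := by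
        have hsq : Integrable (fun a => (lam * w a ^ 2) ^ 2) κ := by
          have h : (fun a => (lam * w a ^ 2) ^ 2) = fun a => lam ^ 2 * (w a ^ 2) ^ 2 := by
            funext a; ring
          rw [h]; exact hi4.const_mul _
        have e1 := integral_add (μ := κ) ((integrable_const 1).sub (hi2.const_mul lam)) hsq
        have e2 := integral_sub (μ := κ) (integrable_const 1) (hi2.const_mul lam)
        simp only [Pi.add_apply, Pi.sub_apply, integral_const, probReal_univ, smul_eq_mul, one_mul] at e1 e2
        rw [e1, e2, integral_const_mul]
        have h : (fun a => (lam * w a ^ 2) ^ 2) = fun a => lam ^ 2 * (w a ^ 2) ^ 2 := by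
          funext a; ring
        rw [h, integral_const_mul]
    _ ≤ 1 + (lam ^ 2 * (4 * B ^ 2) - lam) * ∫ a, w a ^ 2 ∂κ := by
        have h1 : lam ^ 2 * ∫ a, (w a ^ 2) ^ 2 ∂κ ≤ lam ^ 2 * (4 * B ^ 2 * ∫ a, w a ^ 2 ∂κ) :=
          mul_le_mul_of_nonneg_left h42 (sq_nonneg _)
        nlinarith
    _ ≤ Real.exp ((lam ^ 2 * (4 * B ^ 2) - lam) * ∫ a, w a ^ 2 ∂κ) := by
        linarith [Real.add_one_le_exp ((lam ^ 2 * (4 * B ^ 2) - lam) * ∫ a, w a ^ 2 ∂κ)]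

lemma gaussian_pdf_mul_exp (σ c : ℝ) (hσ : 0 < σ) :
    (∫ x : ℝ, gaussianPDFReal 0 (⟨σ ^ 2, sq_nonneg σ⟩ : NNReal) x * Real.exp (c * x))
      = Real.exp (σ ^ 2 * c ^ 2 / 2) ∧
    Integrable (fun x : ℝ => gaussianPDFReal 0 (⟨σ ^ 2, sq_nonneg σ⟩ : NNReal) x
      * Real.exp (c * x)) := by
  have hv : (0:ℝ) < σ ^ 2 := by positivity
  have hb : (0:ℝ) < 1 / (2 * σ ^ 2) := by positivity
  have hform : ∀ x : ℝ, gaussianPDFReal 0 (⟨σ ^ 2, sq_nonneg σ⟩ : NNReal) x * Real.exp (c * x)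
      = (Real.sqrt (2 * (Real.pi * σ ^ 2)))⁻¹ * Real.exp (σ ^ 2 * c ^ 2 / 2)
        * Real.exp (-(1 / (2 * σ ^ 2)) * (x - σ ^ 2 * c) ^ 2) := by
    intro x
    unfold gaussianPDFReal
    change (√(2 * Real.pi * σ ^ 2))⁻¹ * Real.exp (-(x - 0) ^ 2 / (2 * σ ^ 2)) * Real.exp (c * x) = _
    push_cast
    rw [mul_assoc ((Real.sqrt (2 * (Real.pi * σ ^ 2)))⁻¹), ← Real.exp_add, mul_assoc,
      ← Real.exp_add]
    congr 1
    · rw [mul_assoc]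
    · rw [Real.exp_eq_exp]
      field_simp
      ring
  have hintg : Integrable (fun x : ℝ => Real.exp (-(1 / (2 * σ ^ 2)) * (x - σ ^ 2 * c) ^ 2)) :=
    Integrable.comp_sub_right (integrable_exp_neg_mul_sq hb) (σ ^ 2 * c)
  have hint : Integrable (fun x : ℝ => gaussianPDFReal 0 (⟨σ ^ 2, sq_nonneg σ⟩ : NNReal) x
      * Real.exp (c * x)) := by
    have := (hintg.const_mul ((Real.sqrt (2 * (Real.pi * σ ^ 2)))⁻¹ * Real.exp (σ ^ 2 * c ^ 2 / 2)))
    apply this.congr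
    filter_upwards with x using (hform x).symm
  refine ⟨?_, hint⟩
  have e1 : (∫ x : ℝ, gaussianPDFReal 0 (⟨σ ^ 2, sq_nonneg σ⟩ : NNReal) x * Real.exp (c * x))
      = (Real.sqrt (2 * (Real.pi * σ ^ 2)))⁻¹ * Real.exp (σ ^ 2 * c ^ 2 / 2)
        * ∫ x : ℝ, Real.exp (-(1 / (2 * σ ^ 2)) * (x - σ ^ 2 * c) ^ 2) := by
    rw [← integral_const_mul]
    exact integral_congr_ae (ae_of_all _ hform)
  rw [e1]
  have e2 : (∫ x : ℝ, Real.exp (-(1 / (2 * σ ^ 2)) * (x - σ ^ 2 * c) ^ 2))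
      = ∫ x : ℝ, Real.exp (-(1 / (2 * σ ^ 2)) * x ^ 2) := by
    rw [integral_sub_right_eq_self (μ := volume)
      (fun z : ℝ => Real.exp (-(1 / (2 * σ ^ 2)) * z ^ 2)) (σ ^ 2 * c)]
  rw [e2, integral_gaussian]
  rw [show Real.pi / (1 / (2 * σ ^ 2)) = 2 * (Real.pi * σ ^ 2) by field_simp]
  field_simp [Real.sqrt_eq_zero', le_of_lt (by positivity : (0:ℝ) < 2 * (Real.pi * σ ^ 2))]

lemma gaussian_mgf (σ : ℝ) (hσ : 0 < σ) (c : ℝ) :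
    Integrable (fun s : ℝ => Real.exp (c * s)) (gaussianReal 0 ⟨σ ^ 2, sq_nonneg σ⟩) ∧
    ∫ s, Real.exp (c * s) ∂(gaussianReal 0 ⟨σ ^ 2, sq_nonneg σ⟩)
      = Real.exp (σ ^ 2 * c ^ 2 / 2) := by
  obtain ⟨hval, hint⟩ := gaussian_pdf_mul_exp σ c hσ
  have hv : (⟨σ ^ 2, sq_nonneg σ⟩ : NNReal) ≠ 0 := by
    intro h
    have : σ ^ 2 = 0 := congrArg Subtype.val h
    exact hσ.ne' ((pow_eq_zero_iff two_ne_zero).mp this)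
  have hd : gaussianReal 0 (⟨σ ^ 2, sq_nonneg σ⟩ : NNReal)
      = volume.withDensity fun x =>
        ((Real.toNNReal (gaussianPDFReal 0 (⟨σ ^ 2, sq_nonneg σ⟩ : NNReal) x) : NNReal) : ENNReal) := by
    rw [gaussianReal_of_var_ne_zero 0 hv]
    rfl
  have hmeas : Measurable fun x =>
      Real.toNNReal (gaussianPDFReal 0 (⟨σ ^ 2, sq_nonneg σ⟩ : NNReal) x) :=
    (measurable_gaussianPDFReal 0 _).real_toNNReal
  have hsmul : ∀ x : ℝ, (Real.toNNReal (gaussianPDFReal 0 (⟨σ ^ 2, sq_nonneg σ⟩ : NNReal) x))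
      • Real.exp (c * x)
      = gaussianPDFReal 0 (⟨σ ^ 2, sq_nonneg σ⟩ : NNReal) x * Real.exp (c * x) := by
    intro x
    rw [NNReal.smul_def, smul_eq_mul]
    congr 1
    exact Real.coe_toNNReal _ (gaussianPDFReal_nonneg _ _ _)
  constructor
  · rw [hd, integrable_withDensity_iff_integrable_smul hmeas]
    exact hint.congr (ae_of_all _ fun x => (hsmul x).symm)
  · rw [hd, integral_withDensity_eq_integral_smul hmeas]
    rw [← hval]
    exact integral_congr_ae (ae_of_all _ hsmul)

lemma chernoff_pi {α : Type*} [MeasurableSpace α] (κ : Measure α) [IsProbabilityMeasure κ]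
    (n : ℕ) (Z : Fin n → α → ℝ) (hZm : ∀ i, Measurable (Z i))
    (hZi : ∀ i, Integrable (fun a => Real.exp (Z i a)) κ)
    (K : Fin n → ℝ) (hK : ∀ i, ∫ a, Real.exp (Z i a) ∂κ ≤ Real.exp (K i)) (t : ℝ) :
    Measure.pi (fun _ : Fin n => κ) {x | t ≤ ∑ i, Z i (x i)} ≤
      ENNReal.ofReal (Real.exp (∑ i, K i - t)) := by
  letI : MeasureSpace α := ⟨κ⟩
  have hvol : (volume : Measure (Fin n → α)) = Measure.pi fun _ => κ := rfl
  have hprod : Integrable (fun x : Fin n → α => ∏ i, Real.exp (Z i (x i)))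
      (Measure.pi fun _ : Fin n => κ) := by
    rw [← hvol]
    exact Integrable.fin_nat_prod (E := fun _ : Fin n => α) hZi
  have hWm : Measurable fun x : Fin n → α => ∑ i, Z i (x i) :=
    Finset.measurable_sum _ fun i _ => (hZm i).comp (measurable_pi_apply i)
  have hexpsum : (fun x : Fin n → α => Real.exp (∑ i, Z i (x i)))
      = fun x => ∏ i, Real.exp (Z i (x i)) := by
    funext x; rw [Real.exp_sum]
  have hWi : Integrable (fun x : Fin n → α => Real.exp (∑ i, Z i (x i)))
      (Measure.pi fun _ : Fin n => κ) := by rw [hexpsum]; exact hprod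
  have hval : ∫ x : Fin n → α, Real.exp (∑ i, Z i (x i)) ∂(Measure.pi fun _ => κ)
      ≤ Real.exp (∑ i, K i) := by
    rw [hexpsum]
    calc ∫ x : Fin n → α, ∏ i, Real.exp (Z i (x i)) ∂(Measure.pi fun _ => κ)
        = ∏ i, ∫ a, Real.exp (Z i a) ∂κ := by
          rw [← hvol]
          exact integral_fin_nat_prod_eq_prod (E := fun _ : Fin n => α)
            (fun i a => Real.exp (Z i a))
      _ ≤ ∏ i, Real.exp (K i) := by
          apply Finset.prod_le_prod
          · exact fun i _ => integral_nonneg fun a => (Real.exp_nonneg _)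
          · exact fun i _ => hK i
      _ = Real.exp (∑ i, K i) := (Real.exp_sum _ _).symm
  -- Markov step
  have hset : {x : Fin n → α | t ≤ ∑ i, Z i (x i)}
      = {x | ENNReal.ofReal (Real.exp t) ≤ ENNReal.ofReal (Real.exp (∑ i, Z i (x i)))} := by
    ext x
    simp only [Set.mem_setOf_eq]
    rw [ENNReal.ofReal_le_ofReal_iff (Real.exp_nonneg _), Real.exp_le_exp]
  rw [hset]
  have hmark := meas_ge_le_lintegral_div (μ := Measure.pi fun _ : Fin n => κ)
    (f := fun x => ENNReal.ofReal (Real.exp (∑ i, Z i (x i))))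
    (measurable_id.ennreal_ofReal.comp (Real.measurable_exp.comp hWm)).aemeasurable
    (ε := ENNReal.ofReal (Real.exp t))
    (by simp [ENNReal.ofReal_eq_zero, not_le, Real.exp_pos t]) ENNReal.ofReal_ne_top
  refine hmark.trans ?_
  have hlint : ∫⁻ x, ENNReal.ofReal (Real.exp (∑ i, Z i (x i))) ∂(Measure.pi fun _ : Fin n => κ)
      = ENNReal.ofReal (∫ x, Real.exp (∑ i, Z i (x i)) ∂(Measure.pi fun _ : Fin n => κ)) :=
    (ofReal_integral_eq_lintegral_ofReal hWi (ae_of_all _ fun x => Real.exp_nonneg _)).symm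
  rw [hlint]
  rw [ENNReal.div_le_iff (by simp [ENNReal.ofReal_eq_zero, not_le, Real.exp_pos t])
    ENNReal.ofReal_ne_top]
  rw [← ENNReal.ofReal_mul (Real.exp_nonneg _)]
  rw [← Real.exp_add]
  apply ENNReal.ofReal_le_ofReal
  rw [sub_add_cancel]
  exact hval

lemma dist2_sq_eq {X : Type*} [MeasurableSpace X] (μ : Measure X) (f g : X → ℝ) :
    dist2 μ f g ^ 2 = ∫ x, (f x - g x) ^ 2 ∂μ :=
  Real.sq_sqrt (integral_nonneg fun x => sq_nonneg _)

lemma dist2_symm {X : Type*} [MeasurableSpace X] (μ : Measure X) (f g : X → ℝ) :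
    dist2 μ f g = dist2 μ g f := by
  unfold dist2
  congr 1
  apply integral_congr_ae
  filter_upwards with x
  ring

set_option maxHeartbeats 2000000 in
theorem key_bound
    {X : Type*} [MeasurableSpace X] (μ : Measure X) [IsProbabilityMeasure μ]
    (σ : ℝ) (hσ : 0 < σ) (n : ℕ)
    (B : ℝ) (hB : 0 < B)
    (C δ : ℝ) (hC : 3 < C) (hδ : 0 < δ)
    (f : X → ℝ) (hfm : Measurable f) (hfb : ∀ x, |f x| ≤ B)
    (g : X → ℝ) (hgm : Measurable g) (hgb : ∀ x, |g x| ≤ B)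
    (fbar : X → ℝ) (hbm : Measurable fbar) (hbb : ∀ x, |fbar x| ≤ B)
    (hfg : C ^ 2 * δ ^ 2 ≤ (n : ℝ) * (dist2 μ f g) ^ 2)
    (hnear : (n : ℝ) * (dist2 μ f fbar) ^ 2 < δ ^ 2) :
    jointLaw μ σ n fbar
        {dat | ∑ i, (dat.2 i - g (dat.1 i)) ^ 2 ≤ ∑ i, (dat.2 i - f (dat.1 i)) ^ 2}
      ≤ ENNReal.ofReal (3 * Real.exp (-(Lconst C σ B) * δ ^ 2)) := by
  classical
  set ν : Measure ℝ := gaussianReal 0 ⟨σ ^ 2, sq_nonneg σ⟩ with hν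
  haveI : IsProbabilityMeasure ν := instIsProbabilityMeasureGaussianReal 0 _
  set πμ : Measure (Fin n → X) := Measure.pi fun _ : Fin n => μ with hπμ
  set πν : Measure (Fin n → ℝ) := Measure.pi fun _ : Fin n => ν with hπν
  set T : (Fin n → X) × (Fin n → ℝ) → (Fin n → X) × (Fin n → ℝ) :=
    fun p => (p.1, fun i => fbar (p.1 i) + p.2 i) with hT
  have hTm : Measurable T := by
    rw [hT]
    apply Measurable.prodMk measurable_fst
    exact measurable_pi_lambda _ fun i =>
      ((hbm.comp ((measurable_pi_apply i).comp measurable_fst)).add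
        ((measurable_pi_apply i).comp measurable_snd))
  set E : Set ((Fin n → X) × (Fin n → ℝ)) :=
    {dat | ∑ i, (dat.2 i - g (dat.1 i)) ^ 2 ≤ ∑ i, (dat.2 i - f (dat.1 i)) ^ 2} with hE
  have hsum_meas : ∀ (u : X → ℝ), Measurable u → Measurable
      (fun dat : (Fin n → X) × (Fin n → ℝ) => ∑ i, (dat.2 i - u (dat.1 i)) ^ 2) := by
    intro u hu
    apply Finset.measurable_sum
    intro i _
    exact (((measurable_pi_apply i).comp measurable_snd).sub
      (hu.comp ((measurable_pi_apply i).comp measurable_fst))).pow_const 2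
  have hEm : MeasurableSet E := measurableSet_le (hsum_meas g hgm) (hsum_meas f hfm)
  have hmap : jointLaw μ σ n fbar E = (πμ.prod πν) (T ⁻¹' E) := by
    unfold jointLaw
    exact Measure.map_apply hTm hEm
  rw [hmap]
  -- bad sets
  set Gh : Set (Fin n → X) := {x | ∑ i, (g (x i) - f (x i)) ^ 2 < (C ^ 2 - 1) * δ ^ 2} with hGh
  set Ga : Set (Fin n → X) := {x | 2 * δ ^ 2 ≤ ∑ i, (fbar (x i) - f (x i)) ^ 2} with hGa
  have hsum_meas' : ∀ (u w : X → ℝ), Measurable u → Measurable w → Measurable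
      (fun x : Fin n → X => ∑ i, (u (x i) - w (x i)) ^ 2) := by
    intro u w hu hw
    apply Finset.measurable_sum
    intro i _
    exact ((hu.comp (measurable_pi_apply i)).sub (hw.comp (measurable_pi_apply i))).pow_const 2
  have hGhm : MeasurableSet Gh := measurableSet_lt (hsum_meas' g f hgm hfm) measurable_const
  have hGam : MeasurableSet Ga := measurableSet_le measurable_const (hsum_meas' fbar f hbm hfm)
  have hsub : T ⁻¹' E ⊆ ((Ghᶜ ∩ Gaᶜ) ×ˢ Set.univ ∩ T ⁻¹' E) ∪ Gh ×ˢ Set.univ ∪ Ga ×ˢ Set.univ := by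
    intro p hp
    by_cases h1 : p.1 ∈ Gh
    · exact Or.inl (Or.inr (by simp [Set.mem_prod, h1]))
    · by_cases h2 : p.1 ∈ Ga
      · exact Or.inr (by simp [Set.mem_prod, h2])
      · exact Or.inl (Or.inl ⟨by simp [Set.mem_prod, h1, h2], hp⟩)
  have hunion : (πμ.prod πν) (T ⁻¹' E) ≤
      (πμ.prod πν) ((Ghᶜ ∩ Gaᶜ) ×ˢ Set.univ ∩ T ⁻¹' E)
      + (πμ.prod πν) (Gh ×ˢ Set.univ) + (πμ.prod πν) (Ga ×ˢ Set.univ) :=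
    (measure_mono hsub).trans ((measure_union_le _ _).trans
      (add_le_add (measure_union_le _ _) le_rfl))
  refine hunion.trans ?_
  have hLpos3 : Lconst C σ B ≤ 3 / (16 * B ^ 2 * (3 * C ^ 2 + 1)) := min_le_right _ _
  have hLpos2 : Lconst C σ B ≤ 3 / (64 * B ^ 2) := (min_le_left _ _).trans (min_le_right _ _)
  have hLpos1 : Lconst C σ B ≤ (Real.sqrt (C ^ 2 - 1) - 2 * Real.sqrt 2) ^ 2 / (8 * σ ^ 2) :=
    (min_le_left _ _).trans (min_le_left _ _)
  have hC0 : (0:ℝ) < C := by linarith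
  haveI : IsProbabilityMeasure πν := by rw [hπν]; infer_instance
  have habs_sub : ∀ (u w : X → ℝ), (∀ a, |u a| ≤ B) → (∀ a, |w a| ≤ B) →
      ∀ a, (u a - w a) ^ 2 ≤ 4 * B ^ 2 := by
    intro u w hu hw a
    have h1 : |u a - w a| ≤ 2 * B := (abs_sub _ _).trans (by linarith [hu a, hw a])
    calc (u a - w a) ^ 2 = |u a - w a| ^ 2 := (sq_abs _).symm
      _ ≤ (2 * B) ^ 2 := pow_le_pow_left₀ (abs_nonneg _) h1 2
      _ = 4 * B ^ 2 := by ring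
  -- three bounds
  have bound_h : (πμ.prod πν) (Gh ×ˢ Set.univ) ≤
      ENNReal.ofReal (Real.exp (-(Lconst C σ B) * δ ^ 2)) := by
    have hprodGh : (πμ.prod πν) (Gh ×ˢ Set.univ) = πμ Gh := by
      rw [Measure.prod_prod, measure_univ, mul_one]
    rw [hprodGh]
    set lam2 : ℝ := 1 / (8 * B ^ 2 * C ^ 2) with hlam2def
    have hlam2pos : 0 < lam2 := by rw [hlam2def]; positivity
    set mh : ℝ := ∫ a, (g a - f a) ^ 2 ∂μ with hmhdef
    have hmh_eq : dist2 μ f g ^ 2 = mh := by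
      rw [dist2_sq_eq, hmhdef]
      apply integral_congr_ae; filter_upwards with a; ring
    have hnmh : C ^ 2 * δ ^ 2 ≤ (n : ℝ) * mh := by rw [← hmh_eq]; exact hfg
    have hbd4 := habs_sub g f hgb hfb
    have hiexp : Integrable (fun a => Real.exp (-(lam2 * (g a - f a) ^ 2))) μ := by
      apply integrable_of_bdd (by fun_prop) (c := 1)
      intro a
      rw [abs_of_nonneg (Real.exp_nonneg _)]
      apply Real.exp_le_one_iff.2
      simp only [neg_nonpos]
      positivity
    have hmgf := mgf_neg_sq_le μ (fun a => g a - f a) (hgm.sub hfm) B lam2 hbd4 hlam2pos.le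
    have hch := chernoff_pi μ n (fun _ a => -(lam2 * (g a - f a) ^ 2))
      (fun i => by fun_prop) (fun i => hiexp)
      (fun _ => (lam2 ^ 2 * (4 * B ^ 2) - lam2) * mh) (fun i => hmgf)
      (-(lam2 * ((C ^ 2 - 1) * δ ^ 2)))
    have hsubev : Gh ⊆ {x : Fin n → X |
        -(lam2 * ((C ^ 2 - 1) * δ ^ 2)) ≤ ∑ i, -(lam2 * (g (x i) - f (x i)) ^ 2)} := by
      intro x hx
      have hx' : ∑ i, (g (x i) - f (x i)) ^ 2 < (C ^ 2 - 1) * δ ^ 2 := hx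
      have hsum : ∑ i, -(lam2 * (g (x i) - f (x i)) ^ 2)
          = -(lam2 * ∑ i, (g (x i) - f (x i)) ^ 2) := by
        rw [Finset.mul_sum, ← Finset.sum_neg_distrib]
      rw [Set.mem_setOf_eq, hsum]
      have := mul_le_mul_of_nonneg_left hx'.le hlam2pos.le
      linarith
    refine (measure_mono hsubev).trans (hch.trans ?_)
    apply ENNReal.ofReal_le_ofReal
    apply Real.exp_le_exp.2
    have hsumK : ∑ _i : Fin n, ((lam2 ^ 2 * (4 * B ^ 2) - lam2) * mh)
        = (n : ℝ) * ((lam2 ^ 2 * (4 * B ^ 2) - lam2) * mh) := by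
      rw [Finset.sum_const, Finset.card_univ, Fintype.card_fin, nsmul_eq_mul]
    rw [hsumK]
    have hcoefval : lam2 ^ 2 * (4 * B ^ 2) - lam2 = lam2 * (1 / (2 * C ^ 2) - 1) := by
      rw [hlam2def]; field_simp; ring
    have hfacneg : lam2 * (1 / (2 * C ^ 2) - 1) ≤ 0 := by
      apply mul_nonpos_of_nonneg_of_nonpos hlam2pos.le
      have : 1 / (2 * C ^ 2) ≤ 1 := by rw [div_le_one (by positivity)]; nlinarith
      linarith
    have h1 : (n : ℝ) * ((lam2 ^ 2 * (4 * B ^ 2) - lam2) * mh)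
        ≤ (lam2 * (1 / (2 * C ^ 2) - 1)) * (C ^ 2 * δ ^ 2) := by
      rw [hcoefval]
      have h2 := mul_le_mul_of_nonpos_left hnmh hfacneg
      calc (n : ℝ) * (lam2 * (1 / (2 * C ^ 2) - 1) * mh)
          = (lam2 * (1 / (2 * C ^ 2) - 1)) * ((n : ℝ) * mh) := by ring
        _ ≤ (lam2 * (1 / (2 * C ^ 2) - 1)) * (C ^ 2 * δ ^ 2) := h2
    have h3 : (lam2 * (1 / (2 * C ^ 2) - 1)) * (C ^ 2 * δ ^ 2)
        + lam2 * ((C ^ 2 - 1) * δ ^ 2) = -(lam2 / 2) * δ ^ 2 := by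
      field_simp
      ring
    have hL3' : Lconst C σ B ≤ lam2 / 2 := by
      refine hLpos3.trans ?_
      have hval : lam2 / 2 = 1 / (16 * B ^ 2 * C ^ 2) := by rw [hlam2def]; ring
      rw [hval, div_le_div_iff₀ (by positivity) (by positivity)]
      nlinarith [pow_pos hB 2, pow_pos hC0 2, mul_pos (pow_pos hB 2) (pow_pos hC0 2)]
    have h4 : Lconst C σ B * δ ^ 2 ≤ (lam2 / 2) * δ ^ 2 :=
      mul_le_mul_of_nonneg_right hL3' (sq_nonneg δ)
    linarith
  have bound_a : (πμ.prod πν) (Ga ×ˢ Set.univ) ≤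
      ENNReal.ofReal (Real.exp (-(Lconst C σ B) * δ ^ 2)) := by
    have hprodGa : (πμ.prod πν) (Ga ×ˢ Set.univ) = πμ Ga := by
      rw [Measure.prod_prod, measure_univ, mul_one]
    rw [hprodGa]
    set lam1 : ℝ := 1 / (8 * B ^ 2) with hlam1def
    have hlam1pos : 0 < lam1 := by rw [hlam1def]; positivity
    set ma : ℝ := ∫ a, (fbar a - f a) ^ 2 ∂μ with hmadef
    have hma_eq : dist2 μ f fbar ^ 2 = ma := by
      rw [dist2_sq_eq, hmadef]
      apply integral_congr_ae; filter_upwards with a; ring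
    have hma0 : 0 ≤ ma := integral_nonneg fun a => sq_nonneg _
    have hnma : (n : ℝ) * ma ≤ δ ^ 2 := by rw [← hma_eq]; exact hnear.le
    have hbd4 := habs_sub fbar f hbb hfb
    have hiexp : Integrable (fun a => Real.exp (lam1 * (fbar a - f a) ^ 2)) μ := by
      apply integrable_of_bdd (by fun_prop) (c := Real.exp (lam1 * (4 * B ^ 2)))
      intro a
      rw [abs_of_nonneg (Real.exp_nonneg _)]
      exact Real.exp_le_exp.2 (mul_le_mul_of_nonneg_left (hbd4 a) hlam1pos.le)
    have hmgf := mgf_sq_le μ (fun a => fbar a - f a) (hbm.sub hfm) B lam1 hbd4 hlam1pos.le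
      (le_of_eq (by rw [hlam1def]; field_simp; ring))
    have hch := chernoff_pi μ n (fun _ a => lam1 * (fbar a - f a) ^ 2)
      (fun i => by fun_prop) (fun i => hiexp)
      (fun _ => 3 / 2 * lam1 * ma) (fun i => hmgf)
      (lam1 * (2 * δ ^ 2))
    have hsubev : Ga ⊆ {x : Fin n → X |
        lam1 * (2 * δ ^ 2) ≤ ∑ i, lam1 * (fbar (x i) - f (x i)) ^ 2} := by
      intro x hx
      have hx' : 2 * δ ^ 2 ≤ ∑ i, (fbar (x i) - f (x i)) ^ 2 := hx
      rw [Set.mem_setOf_eq, ← Finset.mul_sum]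
      exact mul_le_mul_of_nonneg_left hx' hlam1pos.le
    refine (measure_mono hsubev).trans (hch.trans ?_)
    apply ENNReal.ofReal_le_ofReal
    apply Real.exp_le_exp.2
    have hsumK : ∑ _i : Fin n, (3 / 2 * lam1 * ma) = (n : ℝ) * (3 / 2 * lam1 * ma) := by
      rw [Finset.sum_const, Finset.card_univ, Fintype.card_fin, nsmul_eq_mul]
    rw [hsumK]
    have h1 : (n : ℝ) * (3 / 2 * lam1 * ma) ≤ 3 / 2 * lam1 * δ ^ 2 := by
      have h2 : (n : ℝ) * (3 / 2 * lam1 * ma) = 3 / 2 * lam1 * ((n : ℝ) * ma) := by ring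
      rw [h2]
      exact mul_le_mul_of_nonneg_left hnma (by positivity)
    have hL2' : Lconst C σ B ≤ lam1 / 2 := by
      refine hLpos2.trans ?_
      have hval : lam1 / 2 = 1 / (16 * B ^ 2) := by rw [hlam1def]; ring
      rw [hval, div_le_div_iff₀ (by positivity) (by positivity)]
      nlinarith [pow_pos hB 2]
    have h4 : Lconst C σ B * δ ^ 2 ≤ (lam1 / 2) * δ ^ 2 :=
      mul_le_mul_of_nonneg_right hL2' (sq_nonneg δ)
    linarith
  have bound_g : (πμ.prod πν) ((Ghᶜ ∩ Gaᶜ) ×ˢ Set.univ ∩ T ⁻¹' E) ≤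
      ENNReal.ofReal (Real.exp (-(Lconst C σ B) * δ ^ 2)) := by
    set ρ : ℝ := Real.sqrt (C ^ 2 - 1) - 2 * Real.sqrt 2 with hρdef
    have hC21 : (0:ℝ) < C ^ 2 - 1 := by nlinarith
    have hρpos : 0 < ρ := by
      rw [hρdef, sub_pos]
      apply lt_of_pow_lt_pow_left₀ 2 (Real.sqrt_nonneg _)
      rw [mul_pow, Real.sq_sqrt (by norm_num : (0:ℝ) ≤ 2), Real.sq_sqrt hC21.le]
      nlinarith
    have hAm : MeasurableSet ((Ghᶜ ∩ Gaᶜ) ×ˢ (Set.univ : Set (Fin n → ℝ)) ∩ T ⁻¹' E) :=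
      ((hGhm.compl.inter hGam.compl).prod MeasurableSet.univ).inter (hTm hEm)
    rw [Measure.prod_apply hAm]
    have hslice : ∀ x : Fin n → X,
        πν (Prod.mk x ⁻¹' ((Ghᶜ ∩ Gaᶜ) ×ˢ Set.univ ∩ T ⁻¹' E))
          ≤ ENNReal.ofReal (Real.exp (-(Lconst C σ B) * δ ^ 2)) := by
      intro x
      by_cases hx : x ∈ Ghᶜ ∩ Gaᶜ
      · obtain ⟨hx1, hx2⟩ := hx
        set S : ℝ := ∑ i, (g (x i) - f (x i)) ^ 2 with hSdef
        set A2 : ℝ := ∑ i, (fbar (x i) - f (x i)) ^ 2 with hA2def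
        have hS : (C ^ 2 - 1) * δ ^ 2 ≤ S := not_lt.mp hx1
        have hA : A2 < 2 * δ ^ 2 := not_le.mp hx2
        have hSpos : 0 < S := lt_of_lt_of_le (by positivity) hS
        have hA2nn : 0 ≤ A2 := Finset.sum_nonneg fun i _ => sq_nonneg _
        set t0 : ℝ := S - 2 * ∑ i, (fbar (x i) - f (x i)) * (g (x i) - f (x i)) with ht0def
        have hcs : ∑ i, (fbar (x i) - f (x i)) * (g (x i) - f (x i))
            ≤ Real.sqrt A2 * Real.sqrt S := by
          rw [hA2def, hSdef]
          exact Real.sum_mul_le_sqrt_mul_sqrt _ _ _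
        have hsqA : Real.sqrt A2 ≤ Real.sqrt 2 * δ := by
          rw [show Real.sqrt 2 * δ = Real.sqrt (2 * δ ^ 2) by
            rw [Real.sqrt_mul (by norm_num), Real.sqrt_sq hδ.le]]
          exact Real.sqrt_le_sqrt hA.le
        have hsqS : Real.sqrt (C ^ 2 - 1) * δ ≤ Real.sqrt S := by
          rw [show Real.sqrt (C ^ 2 - 1) * δ = Real.sqrt ((C ^ 2 - 1) * δ ^ 2) by
            rw [Real.sqrt_mul hC21.le, Real.sqrt_sq hδ.le]]
          exact Real.sqrt_le_sqrt hS
        have hsqSS : Real.sqrt S * Real.sqrt S = S := Real.mul_self_sqrt hSpos.le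
        have hsqSnn : 0 ≤ Real.sqrt S := Real.sqrt_nonneg _
        have hsqSpos : 0 < Real.sqrt S := Real.sqrt_pos.2 hSpos
        have ht0low : Real.sqrt S * (ρ * δ) ≤ t0 := by
          have h1 : ∑ i, (fbar (x i) - f (x i)) * (g (x i) - f (x i))
              ≤ Real.sqrt 2 * δ * Real.sqrt S :=
            hcs.trans (mul_le_mul_of_nonneg_right hsqA hsqSnn)
          have h2 : ρ * δ ≤ Real.sqrt S - 2 * (Real.sqrt 2 * δ) := by
            rw [hρdef]
            nlinarith [hsqS]
          have h3 : Real.sqrt S * (ρ * δ)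
              ≤ Real.sqrt S * (Real.sqrt S - 2 * (Real.sqrt 2 * δ)) :=
            mul_le_mul_of_nonneg_left h2 hsqSnn
          rw [ht0def]
          nlinarith [h3, h1, hsqSS]
        have ht0pos : 0 < t0 :=
          lt_of_lt_of_le (mul_pos hsqSpos (mul_pos hρpos hδ)) ht0low
        set lam3 : ℝ := t0 / (4 * σ ^ 2 * S) with hlam3def
        have hlam3pos : 0 < lam3 := by
          rw [hlam3def]; exact div_pos ht0pos (by positivity)
        have hsubev : Prod.mk x ⁻¹' ((Ghᶜ ∩ Gaᶜ) ×ˢ Set.univ ∩ T ⁻¹' E)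
            ⊆ {ξ : Fin n → ℝ | lam3 * t0 ≤ ∑ i, lam3 * (2 * (g (x i) - f (x i))) * ξ i} := by
          intro ξ hξ
          have hmem : T (x, ξ) ∈ E := hξ.2
          simp only [hT, hE, Set.mem_setOf_eq] at hmem
          have hkey : ∀ i : Fin n, (fbar (x i) + ξ i - f (x i)) ^ 2
              - (fbar (x i) + ξ i - g (x i)) ^ 2
              = 2 * (g (x i) - f (x i)) * ξ i
                - ((g (x i) - f (x i)) ^ 2
                    - 2 * ((fbar (x i) - f (x i)) * (g (x i) - f (x i)))) := fun i => by ring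
          have hdiff : (∑ i, (fbar (x i) + ξ i - f (x i)) ^ 2)
              - (∑ i, (fbar (x i) + ξ i - g (x i)) ^ 2)
              = (∑ i, 2 * (g (x i) - f (x i)) * ξ i) - t0 := by
            rw [← Finset.sum_sub_distrib, Finset.sum_congr rfl (fun i _ => hkey i),
              Finset.sum_sub_distrib, ht0def, hSdef, Finset.sum_sub_distrib, Finset.mul_sum]
          have h2 : t0 ≤ ∑ i, 2 * (g (x i) - f (x i)) * ξ i := by
            have := hmem
            linarith [hdiff]
          have h3 : ∑ i, lam3 * (2 * (g (x i) - f (x i))) * ξ i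
              = lam3 * ∑ i, 2 * (g (x i) - f (x i)) * ξ i := by
            rw [Finset.mul_sum]
            exact Finset.sum_congr rfl fun i _ => by ring
          rw [Set.mem_setOf_eq, h3]
          exact mul_le_mul_of_nonneg_left h2 hlam3pos.le
        have hch := chernoff_pi ν n (fun i s => lam3 * (2 * (g (x i) - f (x i))) * s)
          (fun i => (measurable_id.const_mul _))
          (fun i => by
            have := (gaussian_mgf σ hσ (lam3 * (2 * (g (x i) - f (x i))))).1
            rw [hν]
            exact this)
          (fun i => σ ^ 2 * (lam3 * (2 * (g (x i) - f (x i)))) ^ 2 / 2)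
          (fun i => by
            have := (gaussian_mgf σ hσ (lam3 * (2 * (g (x i) - f (x i))))).2
            rw [hν]
            exact le_of_eq this)
          (lam3 * t0)
        refine (measure_mono hsubev).trans ?_
        have hch2 : πν {ξ : Fin n → ℝ |
            lam3 * t0 ≤ ∑ i, lam3 * (2 * (g (x i) - f (x i))) * ξ i}
            ≤ ENNReal.ofReal (Real.exp
              ((∑ i : Fin n, σ ^ 2 * (lam3 * (2 * (g (x i) - f (x i)))) ^ 2 / 2)
                - lam3 * t0)) := by
          rw [hπν]
          exact hch
        refine hch2.trans ?_
        apply ENNReal.ofReal_le_ofReal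
        apply Real.exp_le_exp.2
        have hsumK : ∑ i : Fin n, σ ^ 2 * (lam3 * (2 * (g (x i) - f (x i)))) ^ 2 / 2
            = 2 * σ ^ 2 * lam3 ^ 2 * S := by
          have h : ∀ i : Fin n, σ ^ 2 * (lam3 * (2 * (g (x i) - f (x i)))) ^ 2 / 2
              = 2 * σ ^ 2 * lam3 ^ 2 * (g (x i) - f (x i)) ^ 2 := fun i => by ring
          rw [Finset.sum_congr rfl fun i _ => h i, ← Finset.mul_sum, hSdef]
        rw [hsumK]
        have hval : 2 * σ ^ 2 * lam3 ^ 2 * S - lam3 * t0 = -(t0 ^ 2 / (8 * σ ^ 2 * S)) := by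
          rw [hlam3def]
          field_simp
          ring
        rw [hval]
        have ht0sq : S * (ρ * δ) ^ 2 ≤ t0 ^ 2 := by
          nlinarith [ht0low, hsqSS, hsqSnn, mul_pos hρpos hδ,
            mul_pos hsqSpos (mul_pos hρpos hδ)]
        have h5 : ρ ^ 2 * δ ^ 2 / (8 * σ ^ 2) ≤ t0 ^ 2 / (8 * σ ^ 2 * S) := by
          rw [div_le_div_iff₀ (by positivity) (by positivity)]
          nlinarith [ht0sq, hSpos, sq_nonneg σ, pow_pos hσ 2]
        have hL1' : Lconst C σ B * δ ^ 2 ≤ ρ ^ 2 * δ ^ 2 / (8 * σ ^ 2) := by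
          have h6 : Lconst C σ B * δ ^ 2 ≤ (ρ ^ 2 / (8 * σ ^ 2)) * δ ^ 2 :=
            mul_le_mul_of_nonneg_right hLpos1 (sq_nonneg δ)
          calc Lconst C σ B * δ ^ 2 ≤ (ρ ^ 2 / (8 * σ ^ 2)) * δ ^ 2 := h6
            _ = ρ ^ 2 * δ ^ 2 / (8 * σ ^ 2) := by ring
        linarith
      · have hempty : Prod.mk x ⁻¹' ((Ghᶜ ∩ Gaᶜ) ×ˢ (Set.univ : Set (Fin n → ℝ))) = ∅ := by
          ext ξ
          simp [hx]
        calc πν (Prod.mk x ⁻¹' ((Ghᶜ ∩ Gaᶜ) ×ˢ Set.univ ∩ T ⁻¹' E))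
            ≤ πν (Prod.mk x ⁻¹' ((Ghᶜ ∩ Gaᶜ) ×ˢ Set.univ)) :=
              measure_mono (Set.preimage_mono Set.inter_subset_left)
          _ = 0 := by rw [hempty]; simp
          _ ≤ _ := zero_le
    calc ∫⁻ x, πν (Prod.mk x ⁻¹' ((Ghᶜ ∩ Gaᶜ) ×ˢ Set.univ ∩ T ⁻¹' E)) ∂πμ
        ≤ ∫⁻ _x, ENNReal.ofReal (Real.exp (-(Lconst C σ B) * δ ^ 2)) ∂πμ :=
          lintegral_mono hslice
      _ = ENNReal.ofReal (Real.exp (-(Lconst C σ B) * δ ^ 2)) := by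
          haveI : IsProbabilityMeasure πμ := by rw [hπμ]; infer_instance
          rw [lintegral_const, measure_univ, mul_one]
  calc (πμ.prod πν) ((Ghᶜ ∩ Gaᶜ) ×ˢ Set.univ ∩ T ⁻¹' E)
      + (πμ.prod πν) (Gh ×ˢ Set.univ) + (πμ.prod πν) (Ga ×ˢ Set.univ)
      ≤ ENNReal.ofReal (Real.exp (-(Lconst C σ B) * δ ^ 2))
        + ENNReal.ofReal (Real.exp (-(Lconst C σ B) * δ ^ 2))
        + ENNReal.ofReal (Real.exp (-(Lconst C σ B) * δ ^ 2)) := by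
        exact add_le_add (add_le_add bound_g bound_h) bound_a
    _ = ENNReal.ofReal (3 * Real.exp (-(Lconst C σ B) * δ ^ 2)) := by
        rw [← ENNReal.ofReal_add (Real.exp_nonneg _) (Real.exp_nonneg _),
          ← ENNReal.ofReal_add (by positivity) (Real.exp_nonneg _)]
        congr 1
        ring
end Helpers

/-- **Two-point testing bound, bounded case** (Lemma 2.5).  Testing `H₀ : f̄ = f` vs
`H₁ : f̄ = g` where `n‖f − g‖²_{L2(P_X)} ≥ C²δ²` for some `C > 3`, the test
`ψ(Y⃗) = 1(‖Y⃗ − f(X⃗)‖₂² ≥ ‖Y⃗ − g(X⃗)‖₂²)` has both error probabilities (uniformly over true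
regression functions `f̄` that are `δ/√n`-close to `f`, resp. to `g`) bounded by
`3 exp(−L(C,σ,B_F) δ²)`. -/
theorem two_point_testing_bounded
    {X : Type*} [MeasurableSpace X] (μ : Measure X) [IsProbabilityMeasure μ]
    (σ : ℝ) (hσ : 0 < σ) (n : ℕ)
    (F : Set (X → ℝ)) (hFconv : Convex ℝ F) (hFmeas : ∀ f ∈ F, Measurable f)
    (B : ℝ) (hB : 0 < B) (hbd : ∀ f ∈ F, ∀ x, |f x| ≤ B)
    (C δ : ℝ) (hC : 3 < C) (hδ : 0 < δ)
    (f : X → ℝ) (hf : f ∈ F) (g : X → ℝ) (hg : g ∈ F)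
    (hfg : C ^ 2 * δ ^ 2 ≤ (n : ℝ) * (dist2 μ f g) ^ 2) :
    (∀ fbar ∈ F, (n : ℝ) * (dist2 μ f fbar) ^ 2 < δ ^ 2 →
        jointLaw μ σ n fbar
            {dat | ∑ i, (dat.2 i - g (dat.1 i)) ^ 2 ≤ ∑ i, (dat.2 i - f (dat.1 i)) ^ 2}
          ≤ ENNReal.ofReal (3 * Real.exp (-(Lconst C σ B) * δ ^ 2))) ∧
    (∀ fbar ∈ F, (n : ℝ) * (dist2 μ g fbar) ^ 2 < δ ^ 2 →
        jointLaw μ σ n fbar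
            {dat | ∑ i, (dat.2 i - f (dat.1 i)) ^ 2 < ∑ i, (dat.2 i - g (dat.1 i)) ^ 2}
          ≤ ENNReal.ofReal (3 * Real.exp (-(Lconst C σ B) * δ ^ 2))) := by
  constructor
  · intro fbar hfbar hclose
    exact key_bound μ σ hσ n B hB C δ hC hδ f (hFmeas f hf) (hbd f hf) g (hFmeas g hg)
      (hbd g hg) fbar (hFmeas fbar hfbar) (hbd fbar hfbar) hfg hclose
  · intro fbar hfbar hclose
    have hsub : {dat : (Fin n → X) × (Fin n → ℝ) |
        ∑ i, (dat.2 i - f (dat.1 i)) ^ 2 < ∑ i, (dat.2 i - g (dat.1 i)) ^ 2}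
        ⊆ {dat : (Fin n → X) × (Fin n → ℝ) |
        ∑ i, (dat.2 i - f (dat.1 i)) ^ 2 ≤ ∑ i, (dat.2 i - g (dat.1 i)) ^ 2} :=
      Set.setOf_subset_setOf.mpr fun dat h => le_of_lt h
    refine (measure_mono hsub).trans ?_
    have hfg' : C ^ 2 * δ ^ 2 ≤ (n : ℝ) * (dist2 μ g f) ^ 2 := by
      rw [dist2_symm μ g f]
      exact hfg
    exact key_bound μ σ hσ n B hB C δ hC hδ g (hFmeas g hg) (hbd g hg) f (hFmeas f hf)
      (hbd f hf) fbar (hFmeas fbar hfbar) (hbd fbar hfbar) hfg' hclose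

end
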